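/- Fix k ≥ 1, 0 < q < 1 (more generally q ≠ 0), and positive reals a_1, a_2, …. Let u : ℤ_{≥0}^k → ℝ satisfy the two-body cumulative conditions: for every n ∈ ℤ_{≥0}^k and every 1 ≤ i ≤ k−1 with n_i = n_{i+1}, ([∇_a^{−1}]_i − q^{−1}[∇_a^{−1}]_{i+1}) u(n) = 0. Then for every n ∈ ℤ_{≥0}^k and indices b ≥ 0, c ≥ 1 with b + c ≤ k such that n_{b+1} = n_{b+2} = … = n_{b+c} (a cluster of size c), one has ([∇_a^{−1}]_r u)(n) = q^{r−(b+c)} ([∇_a^{−1}]_{b+c} u)(n) for every b+1 ≤ r ≤ b+c, and consequently (1−q^{−1}) Σ_{r=b+1}^{b+c} ([∇_a^{−1}]_r u)(n) = (1 − q^{−c}) ([∇_a^{−1}]_{b+c} u)(n). -/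
import Mathlib


/-!
STATEMENT 6: the two-body cumulative conditions imply the c-body relation on a cluster.
Coordinates of `n ∈ ℤ_{≥0}^k` are indexed 0-based by `Fin k` (the paper's `n_r` is
`n ⟨r-1⟩`); the cluster `n_{b+1} = … = n_{b+c}` consists of the coordinates with
0-based index `r` satisfying `b ≤ r < b + c`.
-/

/-- `([∇_a^{-1}] u)(n) = −Σ_{j=1}^{n} a_j⁻¹ u(j)`, applied in the i-th coordinate. -/
noncomputable def gradInv (k : ℕ) (a : ℕ → ℝ) (u : (Fin k → ℕ) → ℝ)
    (i : Fin k) (n : Fin k → ℕ) : ℝ :=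
  -(∑ j ∈ Finset.Icc 1 (n i), (a j)⁻¹ * u (Function.update n i j))

theorem cumulative_conditions_cluster (k : ℕ) (hk : 1 ≤ k)
    (q : ℝ) (hq0 : 0 < q) (hq1 : q < 1)
    (a : ℕ → ℝ) (ha : ∀ i, 0 < a i)
    (u : (Fin k → ℕ) → ℝ)
    (hcc : ∀ n : Fin k → ℕ, ∀ i : Fin k, ∀ h : i.1 + 1 < k,
      n i = n ⟨i.1 + 1, h⟩ →
      gradInv k a u i n - q⁻¹ * gradInv k a u ⟨i.1 + 1, h⟩ n = 0)
    (n : Fin k → ℕ) (b c : ℕ) (hc : 1 ≤ c) (hbck : b + c ≤ k)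
    (hcluster : ∀ r : Fin k, b ≤ r.1 → r.1 < b + c → n r = n ⟨b, by omega⟩) :
    (∀ r : Fin k, b ≤ r.1 → r.1 < b + c →
      gradInv k a u r n
        = q ^ (((r.1 : ℤ) + 1) - ((b : ℤ) + (c : ℤ))) * gradInv k a u ⟨b + c - 1, by omega⟩ n)
    ∧ (1 - q⁻¹) * (∑ r ∈ Finset.univ.filter (fun r : Fin k => b ≤ r.1 ∧ r.1 < b + c),
          gradInv k a u r n)
        = (1 - q ^ (-(c : ℤ))) * gradInv k a u ⟨b + c - 1, by omega⟩ n := by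
  have hne : q ≠ 0 := ne_of_gt hq0
  -- key downward recursion
  have key : ∀ d : ℕ, d < c →
      gradInv k a u ⟨b + c - 1 - d, by omega⟩ n
        = q ^ (-(d : ℤ)) * gradInv k a u ⟨b + c - 1, by omega⟩ n := by
    intro d
    induction d with
    | zero => intro _; simp
    | succ d ih =>
      intro hd
      have hd' : d < c := by omega
      have h1 : b + c - 1 - (d + 1) + 1 < k := by omega
      have heq : n ⟨b + c - 1 - (d + 1), by omega⟩ = n ⟨b + c - 1 - (d + 1) + 1, h1⟩ := by
        rw [hcluster ⟨b + c - 1 - (d + 1), by omega⟩ (by simp; omega) (by simp; omega),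
            hcluster ⟨b + c - 1 - (d + 1) + 1, h1⟩ (by simp; omega) (by simp; omega)]
      have hcc' := hcc n ⟨b + c - 1 - (d + 1), by omega⟩ h1 heq
      have hfin : (⟨b + c - 1 - (d + 1) + 1, h1⟩ : Fin k) = ⟨b + c - 1 - d, by omega⟩ := by
        apply Fin.ext; simp; omega
      rw [hfin] at hcc'
      have : gradInv k a u ⟨b + c - 1 - (d + 1), by omega⟩ n
          = q⁻¹ * gradInv k a u ⟨b + c - 1 - d, by omega⟩ n := by linarith
      rw [this, ih hd', ← mul_assoc, ← zpow_neg_one, ← zpow_add₀ hne]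
      norm_num
  have part1 : ∀ r : Fin k, b ≤ r.1 → r.1 < b + c →
      gradInv k a u r n
        = q ^ (((r.1 : ℤ) + 1) - ((b : ℤ) + (c : ℤ))) * gradInv k a u ⟨b + c - 1, by omega⟩ n := by
    intro r hbr hrc
    have hr : r = ⟨b + c - 1 - (b + c - 1 - r.1), by omega⟩ := by
      apply Fin.ext; simp; omega
    have hk' := key (b + c - 1 - r.1) (by omega)
    rw [hr]
    rw [hk']
    congr 1
    congr 1
    push_cast [show b + c - 1 - (b + c - 1 - r.1) = r.1 by omega]
    omega
  refine ⟨part1, ?_⟩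
  -- geometric sum lemma
  have geo : ∀ m : ℕ, (1 - q⁻¹) * (∑ j ∈ Finset.range m, q ^ ((j : ℤ) + 1 - (m : ℤ)))
      = 1 - q ^ (-(m : ℤ)) := by
    intro m
    induction m with
    | zero => simp
    | succ m ih =>
      rw [Finset.sum_range_succ]
      have hterm : (q : ℝ) ^ ((m : ℤ) + 1 - ((m + 1 : ℕ) : ℤ)) = 1 := by
        push_cast; norm_num
      have hsplit : ∀ j ∈ Finset.range m,
          (q : ℝ) ^ ((j : ℤ) + 1 - ((m + 1 : ℕ) : ℤ)) = q⁻¹ * q ^ ((j : ℤ) + 1 - (m : ℤ)) := by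
        intro j _
        rw [← zpow_neg_one, ← zpow_add₀ hne]
        congr 1
        push_cast; ring
      rw [Finset.sum_congr rfl hsplit, ← Finset.mul_sum, hterm]
      have he : (q : ℝ) ^ (-((m + 1 : ℕ) : ℤ)) = q⁻¹ * q ^ (-(m : ℤ)) := by
        rw [← zpow_neg_one, ← zpow_add₀ hne]
        congr 1
        push_cast; ring
      rw [he]
      linear_combination q⁻¹ * ih
  -- rewrite the sum
  have hsum : (∑ r ∈ Finset.univ.filter (fun r : Fin k => b ≤ r.1 ∧ r.1 < b + c),
      gradInv k a u r n)
      = (∑ j ∈ Finset.range c, q ^ ((j : ℤ) + 1 - (c : ℤ)))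
          * gradInv k a u ⟨b + c - 1, by omega⟩ n := by
    rw [Finset.sum_congr rfl (fun r hr => by
      simp only [Finset.mem_filter] at hr
      exact part1 r hr.2.1 hr.2.2)]
    rw [← Finset.sum_mul]
    congr 1
    have h1 : (∑ r ∈ Finset.univ.filter (fun r : Fin k => b ≤ r.1 ∧ r.1 < b + c),
        q ^ (((r.1 : ℤ) + 1) - ((b : ℤ) + (c : ℤ))))
        = ∑ r : Fin k, if b ≤ r.1 ∧ r.1 < b + c then
            q ^ (((r.1 : ℤ) + 1) - ((b : ℤ) + (c : ℤ))) else 0 := by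
      rw [Finset.sum_filter]
    rw [h1, Fin.sum_univ_eq_sum_range
      (fun m => if b ≤ m ∧ m < b + c then q ^ (((m : ℤ) + 1) - ((b : ℤ) + (c : ℤ))) else 0)]
    rw [← Finset.sum_filter]
    have h2 : (Finset.range k).filter (fun m => b ≤ m ∧ m < b + c) = Finset.Ico b (b + c) := by
      ext m; simp; omega
    rw [h2, Finset.sum_Ico_eq_sum_range]
    simp only [Nat.add_sub_cancel_left]
    apply Finset.sum_congr rfl
    intro j _
    congr 1
    push_cast; ring
  rw [hsum, ← mul_assoc, geo c]
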